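/- arXiv:1509.00558 — 2 statements merged into one kernel-verified Lean document; each statement's English description precedes it below -/
import Mathlib

section
/- For β ∈ (0,1), the function D(x) = 1/(1 - β^x) is convex on (0, ∞). -/
open Real Set

/-- For `β ∈ (0,1)`, the function `D(x) = 1/(1 - β^x)` is convex on `(0, ∞)`. -/
theorem delay_convexOn (β : ℝ) (hβ0 : 0 < β) (hβ1 : β < 1) :
    ConvexOn ℝ (Ioi (0 : ℝ)) (fun x : ℝ => 1 / (1 - β ^ x)) := by
  have hlb : Real.log β < 0 := Real.log_neg hβ0 hβ1
  set f : ℝ → ℝ := fun x => β ^ x with hf_def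
  set g : ℝ → ℝ := fun u => 1 / (1 - u) with hg_def
  have himg : f '' Ioi 0 = Ioo 0 1 := by
    ext y
    constructor
    · rintro ⟨x, hx, rfl⟩
      exact ⟨Real.rpow_pos_of_pos hβ0 x, Real.rpow_lt_one hβ0.le hβ1 hx⟩
    · rintro ⟨hy0, hy1⟩
      refine ⟨Real.log y / Real.log β, ?_, ?_⟩
      · exact div_pos_of_neg_of_neg (Real.log_neg hy0 hy1) hlb
      · show β ^ (Real.log y / Real.log β) = y
        rw [Real.rpow_def_of_pos hβ0, mul_comm, div_mul_cancel₀ _ hlb.ne, Real.exp_log hy0]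
  -- f is convex
  have hf : ConvexOn ℝ (Ioi 0) f := by
    have h1 : ConvexOn ℝ (univ : Set ℝ) (fun x : ℝ => Real.exp (Real.log β * x)) := by
      have := convexOn_exp.comp_affineMap
        (LinearMap.toAffineMap (LinearMap.smulRight (LinearMap.id : ℝ →ₗ[ℝ] ℝ) (Real.log β)))
      simpa [Function.comp_def, mul_comm] using this
    have h2 := h1.subset (subset_univ (Ioi 0)) (convex_Ioi 0)
    refine h2.congr ?_
    intro x _
    rw [hf_def]
    simp [Real.rpow_def_of_pos hβ0]
  -- g is convex on Iio 1
  have hg : ConvexOn ℝ (Iio 1) g := by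
    have hinv : ConvexOn ℝ (Ioi (0:ℝ)) (fun u : ℝ => u⁻¹) := by
      have := (strictConvexOn_zpow (m := -1) (by decide) (by decide)).convexOn
      refine this.congr ?_
      intro x _
      simp
    set A : ℝ →ᵃ[ℝ] ℝ := AffineMap.lineMap (1:ℝ) (0:ℝ) with hA
    have := hinv.comp_affineMap A
    have hpre : A ⁻¹' Ioi 0 = Iio 1 := by
      ext u
      simp [hA, AffineMap.lineMap_apply]
    rw [hpre] at this
    refine this.congr ?_
    intro u _
    simp [hg_def, hA, Function.comp, AffineMap.lineMap_apply, one_div]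
    ring_nf
  have hmono : MonotoneOn g (Iio 1) := by
    intro u hu v hv huv
    simp only [hg_def]
    apply one_div_le_one_div_of_le
    · linarith [mem_Iio.mp hv]
    · linarith
  have hcomp : ConvexOn ℝ (Ioi 0) (g ∘ f) := by
    apply ConvexOn.comp
    · rw [himg]; exact hg.subset Ioo_subset_Iio_self (convex_Ioo 0 1)
    · exact hf
    · rw [himg]; exact hmono.mono Ioo_subset_Iio_self
  exact hcomp
end

section
/- For β ∈ (0,1) and a ∈ (0,1), the function f₂(x) = -D(x)·aˣ = -aˣ/(1 - β^x) is concave on (0, ∞) provided D(x)aˣ = aˣ/(1-β^x) is convex on (0,∞); in particular, for any a, β ∈ (0,1), the function g(x) = aˣ/(1 - β^x) is convex on (0,∞). -/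
open Real Set

/-- Each `x ↦ c^x` (for `c > 0`) satisfies the convexity inequality. -/
lemma rpow_convex_ineq (c : ℝ) (hc : 0 < c) {x y t s : ℝ} (ht : 0 ≤ t) (hs : 0 ≤ s)
    (hts : t + s = 1) : c ^ (t * x + s * y) ≤ t * c ^ x + s * c ^ y := by
  have h := convexOn_exp.2 (mem_univ (x * Real.log c)) (mem_univ (y * Real.log c)) ht hs hts
  simp only [smul_eq_mul] at h
  calc c ^ (t * x + s * y) = Real.exp ((t * x + s * y) * Real.log c) := by
        rw [Real.rpow_def_of_pos hc, mul_comm]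
      _ = Real.exp (t * (x * Real.log c) + s * (y * Real.log c)) := by ring_nf
      _ ≤ t * Real.exp (x * Real.log c) + s * Real.exp (y * Real.log c) := h
      _ = t * c ^ x + s * c ^ y := by
        rw [Real.rpow_def_of_pos hc, Real.rpow_def_of_pos hc, mul_comm (Real.log c) x,
          mul_comm (Real.log c) y]

/-- For `a, β ∈ (0,1)`, `g(x) = aˣ/(1 - βˣ)` is convex on `(0,∞)`, and hence
`f₂(x) = -aˣ/(1 - βˣ)` is concave on `(0,∞)`. -/
theorem f2_concaveOn (a β : ℝ) (ha0 : 0 < a) (ha1 : a < 1) (hβ0 : 0 < β) (hβ1 : β < 1) :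
    ConvexOn ℝ (Ioi (0 : ℝ)) (fun x : ℝ => a ^ x / (1 - β ^ x)) ∧
      ConcaveOn ℝ (Ioi (0 : ℝ)) (fun x : ℝ => -(a ^ x / (1 - β ^ x))) := by
  -- series expansion at each z > 0
  have key : ∀ z : ℝ, 0 < z →
      HasSum (fun n : ℕ => (a * β ^ n) ^ z) (a ^ z / (1 - β ^ z)) := by
    intro z hz
    have hβz : β ^ z < 1 := Real.rpow_lt_one hβ0.le hβ1 hz
    have hβz0 : 0 ≤ β ^ z := Real.rpow_nonneg hβ0.le z
    have hgeo : HasSum (fun n : ℕ => (β ^ z) ^ n) (1 - β ^ z)⁻¹ :=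
      hasSum_geometric_of_lt_one hβz0 hβz
    have h := hgeo.mul_left (a ^ z)
    have heq : (fun n : ℕ => a ^ z * (β ^ z) ^ n) = fun n : ℕ => (a * β ^ n) ^ z := by
      funext n
      rw [Real.mul_rpow ha0.le (pow_nonneg hβ0.le n), ← Real.rpow_natCast β n,
        ← Real.rpow_natCast (β ^ z) n, ← Real.rpow_mul hβ0.le, ← Real.rpow_mul hβ0.le,
        mul_comm z, mul_comm]
    rw [heq] at h
    simpa [div_eq_mul_inv] using h
  have hconv : ConvexOn ℝ (Ioi (0 : ℝ)) (fun x : ℝ => a ^ x / (1 - β ^ x)) := by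
    refine ⟨convex_Ioi 0, ?_⟩
    intro x hx y hy t s ht hs hts
    simp only [smul_eq_mul]
    have hx0 : (0 : ℝ) < x := hx
    have hy0 : (0 : ℝ) < y := hy
    have hp0 : 0 < t * x + s * y := by
      rcases eq_or_lt_of_le ht with h | h
      · have : s = 1 := by linarith
        simpa [← h, this] using hy0
      · have : 0 ≤ s * y := mul_nonneg hs hy0.le
        nlinarith
    have hP := key _ hp0
    have hX := key _ hx0
    have hY := key _ hy0
    have hsum : HasSum (fun n : ℕ => t * (a * β ^ n) ^ x + s * (a * β ^ n) ^ y)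
        (t * (a ^ x / (1 - β ^ x)) + s * (a ^ y / (1 - β ^ y))) :=
      (hX.mul_left t).add (hY.mul_left s)
    exact hasSum_le (fun n => rpow_convex_ineq _ (mul_pos ha0 (pow_pos hβ0 n)) ht hs hts)
      hP hsum
  exact ⟨hconv, hconv.neg⟩
end
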